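/- The quasi-geodesic retraction satisfies the retraction axioms: for X with XᵀAX = J and tangent Z (ZᵀAX + XᵀAZ = 0), the map R_X(Z) = [X, Z]·exp([[JXᵀAZ, −JZᵀAZ],[I_k, JXᵀAZ]])·[I_k; 0]·exp(−JXᵀAZ) satisfies R_X(0) = X and (d/dt) R_X(tZ) |_{t=0} = Z. -/

import Mathlib

open Matrix

noncomputable section
attribute [local instance] Matrix.normedAddCommGroup Matrix.normedSpace


lemma exp_sq_zero {m : Type*} [Fintype m] [DecidableEq m] (M : Matrix m m ℝ) (h : M * M = 0) :
    NormedSpace.exp M = 1 + M := by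
  rw [NormedSpace.exp_eq_tsum ℝ]
  show (∑' n : ℕ, ((n.factorial : ℝ))⁻¹ • M ^ n) = 1 + M
  rw [tsum_eq_sum (s := {0, 1}) ?_]
  · norm_num
  · intro b hb
    simp only [Finset.mem_insert, Finset.mem_singleton] at hb
    push_neg at hb
    obtain ⟨h0, h1⟩ := hb
    have h2 : 2 ≤ b := by omega
    have : M ^ b = 0 := by
      calc M ^ b = M * M * M ^ (b - 2) := by
            rw [← pow_two, ← pow_add]; congr 1; omega
      _ = 0 := by rw [h, zero_mul]
    simp [this]

lemma hasDerivAt_matrix {a b : ℕ} {f : ℝ → Matrix (Fin a) (Fin b) ℝ}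
    {f' : Matrix (Fin a) (Fin b) ℝ} {x : ℝ}
    (h : ∀ i j, HasDerivAt (fun t => f t i j) (f' i j) x) : HasDerivAt f f' x := by
  have H : HasFDerivAt f (ContinuousLinearMap.smulRight (1 : ℝ →L[ℝ] ℝ) f') x := by
    apply hasFDerivAt_pi''
    intro i
    apply hasFDerivAt_pi''
    intro j
    exact (h i j).hasFDerivAt.congr_fderiv (by ext; show (1:ℝ) • f' i j = ((1:ℝ →L[ℝ] ℝ) 1 • f') i j; simp)
  simpa using H.hasDerivAt

lemma hasDerivAt_entry_mul {p q r : Type*} [Fintype q] {f : ℝ → Matrix p q ℝ}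
    {g : ℝ → Matrix q r ℝ} {f' : Matrix p q ℝ} {g' : Matrix q r ℝ} {x : ℝ}
    (hf : ∀ i j, HasDerivAt (fun t => f t i j) (f' i j) x)
    (hg : ∀ i j, HasDerivAt (fun t => g t i j) (g' i j) x) (i : p) (j : r) :
    HasDerivAt (fun t => (f t * g t) i j) ((f' * g x + f x * g') i j) x := by
  simp only [Matrix.mul_apply, Matrix.add_apply, ← Finset.sum_add_distrib]
  apply HasDerivAt.fun_sum
  intro c _
  exact (hf i c).mul (hg c j)

section linfty
attribute [local instance 2000] Matrix.linftyOpNormedAddCommGroup Matrix.linftyOpNormedSpace Matrix.linftyOpNormedRing Matrix.linftyOpNormedAlgebra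

lemma exp_smul_entry_hasDerivAt {m : Type*} [Fintype m] [DecidableEq m] (K : Matrix m m ℝ) (i j : m) :
    HasDerivAt (fun t : ℝ => NormedSpace.exp (t • K) i j) (K i j) 0 := by
  have h := hasDerivAt_exp_smul_const (𝕂 := ℝ) K (0 : ℝ)
  simp only [zero_smul, NormedSpace.exp_zero, one_mul] at h
  have := ((Matrix.entryLinearMap ℝ ℝ i j).toContinuousLinearMap.hasFDerivAt.comp_hasDerivAt 0 h)
  exact this

end linfty

/-- The quasi-geodesic retraction
`R_X(Z) = [X, Z] exp([J XᵀA Z, −J ZᵀA Z; I_k, J XᵀA Z]) [I_k; 0] exp(−J XᵀA Z)`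
satisfies the retraction axioms: `R_X(0) = X` and `(d/dt) R_X(tZ) |_{t=0} = Z`. -/
theorem stmt_19 {n k : ℕ} (A : Matrix (Fin n) (Fin n) ℝ) (J : Matrix (Fin k) (Fin k) ℝ)
    (hA : Aᵀ = A) (hAinv : IsUnit A.det) (hJ : Jᵀ = J) (hJ2 : J * J = 1)
    (X : Matrix (Fin n) (Fin k) ℝ) (hX : Xᵀ * A * X = J)
    (Z : Matrix (Fin n) (Fin k) ℝ) (hZ : Zᵀ * A * X + Xᵀ * A * Z = 0)
    (R : ℝ → Matrix (Fin n) (Fin k) ℝ)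
    (hR : R = fun t => fromCols X (t • Z) *
        NormedSpace.exp (fromBlocks (t • (J * Xᵀ * A * Z)) (-(t ^ 2 • (J * Zᵀ * A * Z)))
          1 (t • (J * Xᵀ * A * Z))) *
        fromRows (1 : Matrix (Fin k) (Fin k) ℝ) (0 : Matrix (Fin k) (Fin k) ℝ) *
        NormedSpace.exp (-(t • (J * Xᵀ * A * Z)))) :
    R 0 = X ∧ HasDerivAt R Z 0 := by
  set B := J * Xᵀ * A * Z with hB
  set C := J * Zᵀ * A * Z with hC
  set Y := fromCols X Z with hY
  set K := fromBlocks B (-C) (1 : Matrix (Fin k) (Fin k) ℝ) B with hK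
  set P := fromRows (1 : Matrix (Fin k) (Fin k) ℝ) (0 : Matrix (Fin k) (Fin k) ℝ) with hP
  have hexpN : NormedSpace.exp
      (fromBlocks 0 0 1 0 : Matrix (Fin k ⊕ Fin k) (Fin k ⊕ Fin k) ℝ) =
      1 + (fromBlocks 0 0 1 0 : Matrix (Fin k ⊕ Fin k) (Fin k ⊕ Fin k) ℝ) := by
    apply exp_sq_zero
    simp [fromBlocks_multiply]
  have hg : R = fun t => Y * NormedSpace.exp (t • K) * P * NormedSpace.exp (t • (-B)) := by
    funext t
    rw [hR]
    by_cases ht : t = 0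
    · subst ht
      simp only [zero_smul, zero_pow, neg_zero, NormedSpace.exp_zero, mul_one, ne_eq,
        OfNat.ofNat_ne_zero, not_false_iff, smul_zero]
      rw [hexpN, Matrix.mul_add, Matrix.mul_one]
      simp [hY, hP, fromCols_mul_fromBlocks, fromCols_mul_fromRows, add_mul]
    · -- t ≠ 0 : conjugation trick
      have h1 : (fromBlocks (t • 1) 0 0 1 : Matrix (Fin k ⊕ Fin k) (Fin k ⊕ Fin k) ℝ) *
          fromBlocks (t⁻¹ • 1) 0 0 1 = 1 := by
        simp [fromBlocks_multiply, smul_smul, mul_inv_cancel₀ ht, inv_mul_cancel₀ ht, one_smul, ← fromBlocks_one]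
      have h2 : (fromBlocks (t⁻¹ • 1) 0 0 1 : Matrix (Fin k ⊕ Fin k) (Fin k ⊕ Fin k) ℝ) *
          fromBlocks (t • 1) 0 0 1 = 1 := by
        simp [fromBlocks_multiply, smul_smul, inv_mul_cancel₀ ht, mul_inv_cancel₀ ht, one_smul, ← fromBlocks_one]
      set U : (Matrix (Fin k ⊕ Fin k) (Fin k ⊕ Fin k) ℝ)ˣ :=
        ⟨fromBlocks (t • 1) 0 0 1, fromBlocks (t⁻¹ • 1) 0 0 1, h1, h2⟩ with hU
      have hM : fromBlocks (t • B) (-(t ^ 2 • C)) 1 (t • B) =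
          (U : Matrix (Fin k ⊕ Fin k) (Fin k ⊕ Fin k) ℝ) * (t • K) *
          (↑U⁻¹ : Matrix (Fin k ⊕ Fin k) (Fin k ⊕ Fin k) ℝ) := by
        show _ = fromBlocks (t • 1) 0 0 1 * (t • K) * fromBlocks (t⁻¹ • 1) 0 0 1
        simp only [hK, Matrix.fromBlocks_smul, fromBlocks_multiply, Matrix.smul_mul, Matrix.mul_smul,
          smul_smul, Matrix.mul_zero, Matrix.zero_mul, Matrix.mul_one, Matrix.one_mul,
          add_zero, zero_add, smul_neg]
        have e1 : t⁻¹ * (t * t) = t := by field_simp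
        have e2 : t⁻¹ * t = 1 := inv_mul_cancel₀ ht
        simp [smul_smul, e1, e2, sq]
      beta_reduce
      rw [hM, Matrix.exp_units_conj]
      have h5 : X.fromCols (t • Z) * (U : Matrix (Fin k ⊕ Fin k) (Fin k ⊕ Fin k) ℝ) =
          t • Y := by
        show X.fromCols (t • Z) * fromBlocks (t • 1) 0 0 1 = t • Y
        rw [fromCols_mul_fromBlocks]
        ext i (j | j) <;>
          simp [hY, fromCols, Matrix.mul_apply, mul_comm]
      have h6 : (↑U⁻¹ : Matrix (Fin k ⊕ Fin k) (Fin k ⊕ Fin k) ℝ) * P = t⁻¹ • P := by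
        show fromBlocks (t⁻¹ • 1) 0 0 1 * P = t⁻¹ • P
        rw [hP, fromBlocks_mul_fromRows]
        ext (i | i) j <;> simp
      rw [show X.fromCols (t • Z) *
          ((U : Matrix (Fin k ⊕ Fin k) (Fin k ⊕ Fin k) ℝ) * NormedSpace.exp (t • K) * ↑U⁻¹) *
          P * NormedSpace.exp (-(t • B)) =
          (X.fromCols (t • Z) * (U : Matrix (Fin k ⊕ Fin k) (Fin k ⊕ Fin k) ℝ)) *
          (NormedSpace.exp (t • K) *
          (((↑U⁻¹ : Matrix (Fin k ⊕ Fin k) (Fin k ⊕ Fin k) ℝ) * P) *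
          NormedSpace.exp (-(t • B)))) from by simp only [Matrix.mul_assoc]]
      rw [h5, h6]
      simp only [Matrix.smul_mul, Matrix.mul_smul, smul_smul, inv_mul_cancel₀ ht,
        mul_inv_cancel₀ ht, one_smul, smul_neg, Matrix.mul_assoc]
  have hYKP : Y * K * P = X * B + Z := by
    rw [hY, hK, hP, fromCols_mul_fromBlocks, fromCols_mul_fromRows]
    simp
  have hYP : Y * P = X := by
    rw [hY, hP, fromCols_mul_fromRows]
    simp
  constructor
  · rw [hg]
    simp only [zero_smul, NormedSpace.exp_zero, Matrix.mul_one]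
    rw [hYP]
  · rw [hg]
    apply hasDerivAt_matrix
    intro i j
    have s1 : ∀ (i : Fin n) (j : Fin k ⊕ Fin k),
        HasDerivAt (fun t : ℝ => (Y * NormedSpace.exp (t • K)) i j)
          (((0 : Matrix (Fin n) (Fin k ⊕ Fin k) ℝ) * NormedSpace.exp ((0:ℝ) • K) + Y * K) i j)
          0 :=
      fun i j => hasDerivAt_entry_mul (f := fun _ : ℝ => Y) (f' := 0)
        (fun _ _ => hasDerivAt_const _ _)
        (fun i j => exp_smul_entry_hasDerivAt K i j) i j
    have s2 := fun (i : Fin n) (j : Fin k) => hasDerivAt_entry_mul (g := fun _ : ℝ => P)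
      (g' := 0) s1 (fun _ _ => hasDerivAt_const _ _) i j
    have s3 := fun (i : Fin n) (j : Fin k) => hasDerivAt_entry_mul s2
      (fun i j => exp_smul_entry_hasDerivAt (-B) i j) i j
    convert s3 i j using 1
    simp only [zero_smul, NormedSpace.exp_zero, Matrix.mul_one, Matrix.one_mul,
      Matrix.zero_mul, Matrix.mul_zero, zero_add, add_zero, Matrix.mul_neg, hYKP, hYP]
    simp [Matrix.add_apply, Matrix.neg_apply]

end
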